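/- Every complete multipartite graph with at least two vertices is an undirected Fitch graph; that is, for every complete multipartite graph G with at least two vertices there exists a finite tree T with a {0,1}-edge-labeling λ such that the Fitch graph explained by (T, λ) is isomorphic to G. -/

import Mathlib

open SimpleGraph

/-- A leaf of a graph is a vertex with exactly one neighbour (i.e. a vertex of degree 1). -/
def SimpleGraph.IsLeaf {V : Type*} (T : SimpleGraph V) (v : V) : Prop :=
  ∃! u, T.Adj v u

/-- The undirected Fitch graph explained by an edge-labelled tree `(T, lam)`
(labels: `true` = 1, `false` = 0): its vertices are the leaves of `T`, and two
distinct leaves are adjacent iff the (unique) path between them in `T` contains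
at least one edge labelled `1`. -/
def fitchGraph {V : Type*} (T : SimpleGraph V) (lam : Sym2 V → Bool) :
    SimpleGraph {v : V // T.IsLeaf v} where
  Adj x y := x ≠ y ∧ ∃ p : T.Walk x.1 y.1, p.IsPath ∧ ∃ e ∈ p.edges, lam e = true
  symm := by
    refine ⟨?_⟩
    rintro x y ⟨hxy, p, hp, e, he, hl⟩
    exact ⟨hxy.symm, p.reverse, hp.reverse, e, by
      rw [SimpleGraph.Walk.edges_reverse]; exact List.mem_reverse.mpr he, hl⟩
  loopless := by refine ⟨?_⟩; rintro x ⟨hx, -⟩; exact hx rfl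

/-- A graph is an undirected Fitch graph if it is isomorphic to the Fitch graph
explained by some edge-labelled finite tree. -/
def IsFitchGraph {W : Type*} (G : SimpleGraph W) : Prop :=
  ∃ (V : Type) (T : SimpleGraph V) (lam : Sym2 V → Bool),
    Finite V ∧ T.IsTree ∧ Nonempty (G ≃g fitchGraph T lam)

/-- A graph is complete multipartite if its vertex set can be partitioned into
nonempty independent parts such that two vertices are adjacent iff they lie in
different parts. -/
def IsCompleteMultipartite' {W : Type*} (G : SimpleGraph W) : Prop :=
  ∃ P : Set (Set W), (∀ p ∈ P, p.Nonempty) ∧ (∀ x : W, ∃! p, p ∈ P ∧ x ∈ p) ∧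
    ∀ x y : W, G.Adj x y ↔ ∃ p ∈ P, ∃ q ∈ P, p ≠ q ∧ x ∈ p ∧ y ∈ q

/-! ### Auxiliary construction -/

section Aux

variable {W : Type} (P : Set (Set W)) (q0 : {p // p ∈ P})

/-- adjacency relation for the explaining tree -/
def treeAdj : (W ⊕ {p // p ∈ P}) → (W ⊕ {p // p ∈ P}) → Prop
  | .inl w, .inr q => w ∈ q.1
  | .inr q, .inl w => w ∈ q.1
  | .inr q, .inr q' => q ≠ q' ∧ (q = q0 ∨ q' = q0)
  | .inl _, .inl _ => False

/-- the explaining tree -/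
def myTree : SimpleGraph (W ⊕ {p // p ∈ P}) where
  Adj := treeAdj P q0
  symm := by
    refine ⟨?_⟩
    rintro (a | a) (b | b) h <;> simp only [treeAdj] at h ⊢
    · exact h
    · exact h
    · exact ⟨h.1.symm, h.2.symm⟩
  loopless := by
    refine ⟨?_⟩
    rintro (a | a) h <;> simp only [treeAdj] at h
    exact h.1 rfl

@[simp] lemma myTree_adj_inl_inr {w : W} {q : {p // p ∈ P}} :
    (myTree P q0).Adj (.inl w) (.inr q) ↔ w ∈ q.1 := Iff.rfl

@[simp] lemma myTree_adj_inr_inl {w : W} {q : {p // p ∈ P}} :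
    (myTree P q0).Adj (.inr q) (.inl w) ↔ w ∈ q.1 := Iff.rfl

@[simp] lemma myTree_adj_inr_inr {q q' : {p // p ∈ P}} :
    (myTree P q0).Adj (.inr q) (.inr q') ↔ q ≠ q' ∧ (q = q0 ∨ q' = q0) := Iff.rfl

@[simp] lemma myTree_adj_inl_inl {w w' : W} :
    ¬ (myTree P q0).Adj (.inl w) (.inl w') := fun h => h

/-- the labelling: an edge is labelled `1` iff both of its endpoints are "part" vertices -/
def myLam : Sym2 (W ⊕ {p // p ∈ P}) → Bool :=
  Sym2.lift ⟨fun a b => a.isRight && b.isRight, fun a b => Bool.and_comm _ _⟩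

@[simp] lemma myLam_mk {a b : W ⊕ {p // p ∈ P}} :
    myLam P s(a, b) = (a.isRight && b.isRight) := rfl

variable {P q0}
variable (hpart : ∀ x : W, ∃! p, p ∈ P ∧ x ∈ p)

section
include hpart

lemma part_unique {w : W} {q q' : {p // p ∈ P}} (h : w ∈ q.1) (h' : w ∈ q'.1) : q = q' := by
  obtain ⟨p, -, hu⟩ := hpart w
  have h1 := hu q.1 ⟨q.2, h⟩
  have h2 := hu q'.1 ⟨q'.2, h'⟩
  exact Subtype.ext (h1.trans h2.symm)

/-- leaves of the tree are exactly the `inl` vertices -/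
lemma isLeaf_inl (w : W) : (myTree P q0).IsLeaf (.inl w) := by
  obtain ⟨p, ⟨hp, hw⟩, -⟩ := hpart w
  refine ⟨.inr ⟨p, hp⟩, hw, ?_⟩
  rintro (u | u) hu
  · exact absurd hu (myTree_adj_inl_inl P q0)
  · exact congrArg Sum.inr (part_unique hpart hu hw)

lemma myTree_connected (hne : ∀ p ∈ P, p.Nonempty) : (myTree P q0).Connected := by
  have key : ∀ v, (myTree P q0).Reachable (.inr q0) v := by
    rintro (w | q)
    · obtain ⟨p, ⟨hp, hw⟩, -⟩ := hpart w
      have h1 : (myTree P q0).Reachable (.inr q0) (.inr ⟨p, hp⟩) := by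
        by_cases h : (⟨p, hp⟩ : {p // p ∈ P}) = q0
        · rw [h]
        · exact SimpleGraph.Adj.reachable ⟨fun hh => h hh.symm, Or.inl rfl⟩
      exact h1.trans (SimpleGraph.Adj.reachable (by simpa using hw))
    · by_cases h : q = q0
      · rw [h]
      · exact SimpleGraph.Adj.reachable ⟨fun hh => h hh.symm, Or.inl rfl⟩
  haveI : Nonempty (W ⊕ {p // p ∈ P}) := ⟨.inr q0⟩
  exact SimpleGraph.Connected.mk fun u v => (key u).symm.trans (key v)

end

/-- a generic closure lemma for walks -/
lemma walk_closed {V : Type*} {G : SimpleGraph V} (S : V → Prop)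
    (hS : ∀ a b, G.Adj a b → S a → S b) {u v : V} (p : G.Walk u v) (hu : S u) : S v := by
  induction p with
  | nil => exact hu
  | cons h p ih => exact ih (hS _ _ h hu)

include hpart in
lemma myTree_acyclic : (myTree P q0).IsAcyclic := by
  rw [SimpleGraph.isAcyclic_iff_forall_adj_isBridge]
  have main : ∀ (w : W) (q : {p // p ∈ P}), w ∈ q.1 →
      ¬ ((myTree P q0) \ fromEdgeSet {s(Sum.inl w, Sum.inr q)}).Reachable (.inl w) (.inr q) := by
    intro w q hw ⟨walk⟩
    have hS : ∀ a b, ((myTree P q0) \ fromEdgeSet {s(Sum.inl w, Sum.inr q)}).Adj a b →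
        a = (Sum.inl w : W ⊕ {p // p ∈ P}) → b = Sum.inl w := by
      intro a b hab ha
      subst ha
      exfalso
      rw [sdiff_adj] at hab
      obtain ⟨hadj, hnot⟩ := hab
      rcases b with b | b
      · exact absurd hadj (myTree_adj_inl_inl P q0)
      · refine hnot ?_
        rw [fromEdgeSet_adj]
        have : b = q := part_unique hpart hadj hw
        subst this
        simp
    have key : (Sum.inr q : W ⊕ {p // p ∈ P}) = Sum.inl w :=
      walk_closed (fun v => v = Sum.inl w) hS walk rfl
    simp at key
  have main2 : ∀ (q' : {p // p ∈ P}), q' ≠ q0 →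
      ¬ ((myTree P q0) \ fromEdgeSet {s(Sum.inr q0, Sum.inr q')}).Reachable
        (.inr q0) (.inr q') := by
    intro q' hq' ⟨walk⟩
    set S : (W ⊕ {p // p ∈ P}) → Prop :=
      fun v => (v = .inr q') ∨ (∃ w : W, v = .inl w ∧ w ∈ q'.1) with hSdef
    have hS : ∀ a b, ((myTree P q0) \ fromEdgeSet {s(Sum.inr q0, Sum.inr q')}).Adj a b →
        S a → S b := by
      intro a b hab ha
      rw [sdiff_adj] at hab
      obtain ⟨hadj, hnot⟩ := hab
      rcases ha with ha | ⟨w, ha, hwq⟩ <;> subst ha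
      · rcases b with b | b
        · exact Or.inr ⟨b, rfl, hadj⟩
        · exfalso
          obtain ⟨hne2, h0⟩ := hadj
          have hb : b = q0 := by
            rcases h0 with h | h
            · exact absurd h hq'
            · exact h
          subst hb
          refine hnot ?_
          rw [fromEdgeSet_adj]
          refine ⟨?_, by simpa using hne2⟩
          rw [Sym2.eq_swap]
          simp
      · rcases b with b | b
        · exact absurd hadj (myTree_adj_inl_inl P q0)
        · have : b = q' := part_unique hpart hadj hwq
          exact Or.inl (congrArg Sum.inr this)
    have key : S (.inr q0) := walk_closed S hS walk.reverse (Or.inl rfl)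
    rcases key with h | ⟨w, hw, -⟩
    · exact hq' (Sum.inr.inj h).symm
    · exact (by simp at hw : False)
  rintro (a | a) (b | b) hab
  · exact absurd hab (myTree_adj_inl_inl P q0)
  · rw [SimpleGraph.isBridge_iff]
    exact main a b hab
  · rw [SimpleGraph.isBridge_iff]
    refine fun h => main b a hab ?_
    rw [Sym2.eq_swap] at h
    exact h.symm
  · rw [SimpleGraph.isBridge_iff]
    obtain ⟨hne2, h0⟩ := hab
    rcases h0 with h | h
    · subst h
      exact main2 b hne2.symm
    · subst h
      intro hr
      refine main2 a hne2 ?_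
      rw [Sym2.eq_swap] at hr
      exact hr.symm


include hpart in
lemma myTree_isTree (hne : ∀ p ∈ P, p.Nonempty) : (myTree P q0).IsTree :=
  ⟨myTree_connected hpart hne, myTree_acyclic hpart⟩

include hpart in
lemma not_isLeaf_inr [Fintype W] (hW : 2 ≤ Fintype.card W) (hne : ∀ p ∈ P, p.Nonempty)
    (q : {p // p ∈ P}) : ¬ (myTree P q0).IsLeaf (.inr q) := by
  rintro ⟨u, -, huniq⟩
  obtain ⟨w, hw⟩ := hne q.1 q.2
  have h1 : u = Sum.inl w := (huniq (Sum.inl w) (by simpa using hw)).symm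
  by_cases h : q = q0
  · by_cases hP : ∃ q' : {p // p ∈ P}, q' ≠ q0
    · obtain ⟨q', hq'⟩ := hP
      have h2 : u = Sum.inr q' :=
        (huniq (Sum.inr q') ⟨fun hh => hq' (hh.symm.trans h), Or.inl h⟩).symm
      rw [h1] at h2
      simp at h2
    · push_neg at hP
      obtain ⟨x, y, hxy⟩ := Fintype.exists_pair_of_one_lt_card (α := W) (by omega)
      have hmem : ∀ z : W, z ∈ q.1 := by
        intro z
        obtain ⟨p, ⟨hp, hz⟩, -⟩ := hpart z
        have h5 : (⟨p, hp⟩ : {p // p ∈ P}) = q := (hP ⟨p, hp⟩).trans h.symm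
        rw [← h5]
        exact hz
      have hx : u = Sum.inl x := (huniq (Sum.inl x) (by simpa using hmem x)).symm
      have hy : u = Sum.inl y := (huniq (Sum.inl y) (by simpa using hmem y)).symm
      rw [hx] at hy
      exact hxy (Sum.inl.inj hy)
  · have h2 : u = Sum.inr q0 := (huniq (Sum.inr q0) ⟨h, Or.inr rfl⟩).symm
    rw [h1] at h2
    simp at h2

end Aux

/-! ### Transfer lemmas -/

lemma isFitch_of_iso {W W' : Type*} {G : SimpleGraph W} {G' : SimpleGraph W'}
    (φ : G ≃g G') (h : IsFitchGraph G') : IsFitchGraph G := by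
  obtain ⟨V, T, l, h1, h2, ⟨ψ⟩⟩ := h
  exact ⟨V, T, l, h1, h2, ⟨φ.trans ψ⟩⟩

lemma multipartite_map {W W' : Type*} {G : SimpleGraph W} {G' : SimpleGraph W'}
    (φ : G ≃g G') (h : IsCompleteMultipartite' G) : IsCompleteMultipartite' G' := by
  obtain ⟨P, h1, h2, h3⟩ := h
  refine ⟨(fun p => ⇑φ '' p) '' P, ?_, ?_, ?_⟩
  · rintro _ ⟨p, hp, rfl⟩
    exact (h1 p hp).image φ
  · intro y
    obtain ⟨p, ⟨hp, hx⟩, hu⟩ := h2 (φ.symm y)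
    refine ⟨⇑φ '' p, ⟨⟨p, hp, rfl⟩, ⟨φ.symm y, hx, by simp⟩⟩, ?_⟩
    rintro _ ⟨⟨q, hq, rfl⟩, ⟨z, hz, hzy⟩⟩
    have hzeq : z = φ.symm y := by rw [← hzy]; simp
    subst hzeq
    rw [hu q ⟨hq, hz⟩]
  · intro x y
    have hAdj : G'.Adj x y ↔ G.Adj (φ.symm x) (φ.symm y) := by
      conv_lhs => rw [show x = φ (φ.symm x) by simp, show y = φ (φ.symm y) by simp]
      exact φ.map_rel_iff
    rw [hAdj, h3]
    constructor
    · rintro ⟨p, hp, q, hq, hpq, hxp, hyq⟩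
      refine ⟨⇑φ '' p, ⟨p, hp, rfl⟩, ⇑φ '' q, ⟨q, hq, rfl⟩, ?_, ?_, ?_⟩
      · intro hh
        exact hpq (Set.image_injective.mpr φ.injective hh)
      · exact ⟨φ.symm x, hxp, by simp⟩
      · exact ⟨φ.symm y, hyq, by simp⟩
    · rintro ⟨_, ⟨p, hp, rfl⟩, _, ⟨q, hq, rfl⟩, hpq, ⟨a, ha, hax⟩, ⟨b, hb, hby⟩⟩
      have ha' : a = φ.symm x := by rw [← hax]; simp
      have hb' : b = φ.symm y := by rw [← hby]; simp
      subst ha'; subst hb'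
      exact ⟨p, hp, q, hq, fun hh => hpq (by rw [hh]), ha, hb⟩

/-! ### The key construction -/

lemma key_isFitch {W : Type} [Fintype W] (G : SimpleGraph W)
    (hW : 2 ≤ Fintype.card W) (hG : IsCompleteMultipartite' G) : IsFitchGraph G := by
  classical
  obtain ⟨P, hne, hpart, hadj⟩ := hG
  have hWne : Nonempty W := Fintype.card_pos_iff.mp (by omega)
  obtain ⟨x0⟩ := hWne
  obtain ⟨p0, ⟨hp0, -⟩, -⟩ := hpart x0
  let q0 : {p // p ∈ P} := ⟨p0, hp0⟩
  let pt : W → {p // p ∈ P} := fun w => ⟨(hpart w).choose, (hpart w).choose_spec.1.1⟩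
  have hpt : ∀ w, w ∈ (pt w).1 := fun w => (hpart w).choose_spec.1.2
  have hTree : (myTree P q0).IsTree := myTree_isTree hpart hne
  refine ⟨W ⊕ {p // p ∈ P}, myTree P q0, myLam P, inferInstance, hTree, ?_⟩
  let f : W → {v : W ⊕ {p // p ∈ P} // (myTree P q0).IsLeaf v} :=
    fun w => ⟨.inl w, isLeaf_inl hpart w⟩
  have hbij : Function.Bijective f := by
    constructor
    · intro a b hab
      exact Sum.inl.inj (congrArg Subtype.val hab)
    · rintro ⟨w | q, h⟩
      · exact ⟨w, rfl⟩
      · exact absurd h (not_isLeaf_inr hpart hW hne q)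
  refine ⟨⟨Equiv.ofBijective f hbij, ?_⟩⟩
  intro x y
  show (fitchGraph _ _).Adj (f x) (f y) ↔ G.Adj x y
  constructor
  · rintro ⟨hne', pp, hpp, ee, hee, hlam⟩
    by_contra hnadj
    have hxy : x ≠ y := by
      intro h; subst h; exact hne' rfl
    have hsame : pt x = pt y := by
      by_contra hdiff
      exact hnadj ((hadj x y).mpr ⟨(pt x).1, (pt x).2, (pt y).1, (pt y).2,
        fun hh => hdiff (Subtype.ext hh), hpt x, hpt y⟩)
    set q := pt x with hq
    have hyq : y ∈ q.1 := by rw [hsame]; exact hpt y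
    have hadj1 : (myTree P q0).Adj (.inl x) (.inr q) := hpt x
    have hadj2 : (myTree P q0).Adj (.inr q) (.inl y) := hyq
    let mypath : (myTree P q0).Walk (.inl x) (.inl y) :=
      Walk.cons hadj1 (Walk.cons hadj2 Walk.nil)
    have hmp : mypath.IsPath := by
      simp [mypath, Walk.isPath_def, hxy]
    have hppeq : pp = mypath := by
      obtain ⟨pu, -, hu⟩ := hTree.existsUnique_path (.inl x) (.inl y)
      rw [hu pp hpp, hu mypath hmp]
    rw [hppeq] at hee
    simp only [mypath, Walk.edges_cons, Walk.edges_nil, List.mem_cons, List.mem_singleton,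
      List.not_mem_nil, or_false] at hee
    rcases hee with rfl | rfl <;> simp [myLam, f] at hlam
  · intro h
    obtain ⟨p, hp, q, hqP, hpq, hxp, hyq⟩ := (hadj x y).mp h
    have hxy : x ≠ y := G.ne_of_adj h
    refine ⟨fun hh => hxy (Sum.inl.inj (congrArg Subtype.val hh)), ?_⟩
    let qx : {p // p ∈ P} := ⟨p, hp⟩
    let qy : {p // p ∈ P} := ⟨q, hqP⟩
    have hqxy : qx ≠ qy := fun hh => hpq (congrArg Subtype.val hh)
    have hax : (myTree P q0).Adj (.inl x) (.inr qx) := hxp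
    have hay : (myTree P q0).Adj (.inr qy) (.inl y) := hyq
    by_cases h0x : qx = q0
    · have h0y : qy ≠ q0 := fun hh => hqxy (h0x.trans hh.symm)
      have hmid : (myTree P q0).Adj (.inr qx) (.inr qy) := ⟨hqxy, Or.inl h0x⟩
      refine ⟨Walk.cons hax (Walk.cons hmid (Walk.cons hay Walk.nil)), ?_, ?_⟩
      · simp [Walk.isPath_def, hxy, hqxy, f]
      · exact ⟨s(Sum.inr qx, Sum.inr qy), by simp, rfl⟩
    · by_cases h0y : qy = q0
      · have hmid : (myTree P q0).Adj (.inr qx) (.inr qy) := ⟨hqxy, Or.inr h0y⟩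
        refine ⟨Walk.cons hax (Walk.cons hmid (Walk.cons hay Walk.nil)), ?_, ?_⟩
        · simp [Walk.isPath_def, hxy, hqxy, f]
        · exact ⟨s(Sum.inr qx, Sum.inr qy), by simp, rfl⟩
      · have hmid1 : (myTree P q0).Adj (.inr qx) (.inr q0) := ⟨h0x, Or.inr rfl⟩
        have hmid2 : (myTree P q0).Adj (.inr q0) (.inr qy) := ⟨fun hh => h0y hh.symm, Or.inl rfl⟩
        refine ⟨Walk.cons hax (Walk.cons hmid1 (Walk.cons hmid2 (Walk.cons hay Walk.nil))),
          ?_, ?_⟩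
        · have hy0 : ¬ q0 = qy := fun hh => h0y hh.symm
          have hx0 : ¬ qx = q0 := h0x
          simp [Walk.isPath_def, hxy, hqxy, hx0, hy0, h0x, h0y, f]
        · exact ⟨s(Sum.inr qx, Sum.inr q0), by simp, rfl⟩

/-- every complete multipartite graph with at least two vertices is
an undirected Fitch graph. -/
theorem completeMultipartite_isFitch {W : Type*} [Fintype W] (G : SimpleGraph W)
    (hW : 2 ≤ Fintype.card W) (hG : IsCompleteMultipartite' G) :
    IsFitchGraph G := by
  classical
  let e := Fintype.equivFin W
  let G' : SimpleGraph (Fin (Fintype.card W)) := G.comap ⇑e.symm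
  have φ : G ≃g G' := ⟨e, by intro a b; simp [G', SimpleGraph.comap]⟩
  refine isFitch_of_iso φ (key_isFitch G' (by simpa using hW) (multipartite_map φ hG))
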